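/- Let f : ℝⁿ → ℝ be twice continuously differentiable with gradient g = ∇f, let μ > 0, and let x* be a point at which the Hessian ∇²f(x*) is positive definite; let τ > 0 satisfy τ < 1/‖∇²f(x*)‖. Then there exist a neighborhood N of x* and λ > 0 such that for every x ∈ N, the map y ↦ F_q(x;y) = g(x) + ∇²f(x)(y − x) − P_{[−μ,μ]}(g(x) + ∇²f(x)(y − x) − y/τ) is a bijection (indeed a homeomorphism) from ℝⁿ onto ℝⁿ, and for all y, z ∈ ℝⁿ, ‖z − y‖ ≤ (2/λ)‖F_q(x;z) − F_q(x;y)‖; in particular the inverse maps F_q(x;·)⁻¹ are Lipschitz continuous with the uniform constant 2/λ. -/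

import Mathlib

open scoped RealInnerProductSpace

variable {n : ℕ}
local notation "E" => EuclideanSpace ℝ (Fin n)
local notation "CLM" => Matrix.toEuclideanCLM (𝕜 := ℝ)


private lemma clamp_mono (μ : ℝ) : Monotone fun t : ℝ => max (-μ) (min μ t) :=
  fun _ _ h => max_le_max le_rfl (min_le_min le_rfl h)

private lemma clamp_lip (μ a b : ℝ) :
    |max (-μ) (min μ b) - max (-μ) (min μ a)| ≤ |b - a| := by
  have h1 : |min μ b - min μ a| ≤ |b - a| := by
    have h := abs_max_sub_max_le_abs (-b) (-a) (-μ)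
    rw [max_comm (-b) (-μ), max_comm (-a) (-μ), max_neg_neg, max_neg_neg,
      neg_sub_neg, neg_sub_neg] at h
    calc |min μ b - min μ a| = |min μ a - min μ b| := abs_sub_comm _ _
      _ ≤ |a - b| := h
      _ = |b - a| := abs_sub_comm _ _
  calc |max (-μ) (min μ b) - max (-μ) (min μ a)|
      = |max (min μ b) (-μ) - max (min μ a) (-μ)| := by
        rw [max_comm (-μ) (min μ b), max_comm (-μ) (min μ a)]
    _ ≤ |min μ b - min μ a| := abs_max_sub_max_le_abs _ _ _
    _ ≤ |b - a| := h1

private lemma euclid_inner_nonneg {n : ℕ} (v w : EuclideanSpace ℝ (Fin n))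
    (h : ∀ i, 0 ≤ v i * w i) : 0 ≤ ⟪v, w⟫ := by
  rw [PiLp.inner_apply]
  refine Finset.sum_nonneg fun i _ => ?_
  simpa [RCLike.inner_apply, mul_comm] using h i

private lemma euclid_norm_le {n : ℕ} (v w : EuclideanSpace ℝ (Fin n))
    (h : ∀ i, |v i| ≤ |w i|) : ‖v‖ ≤ ‖w‖ := by
  rw [EuclideanSpace.norm_eq, EuclideanSpace.norm_eq]
  refine Real.sqrt_le_sqrt (Finset.sum_le_sum fun i _ => ?_)
  rw [Real.norm_eq_abs, Real.norm_eq_abs]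
  exact pow_le_pow_left₀ (abs_nonneg _) (h i) 2

private lemma psd_cs {n : ℕ} (T : EuclideanSpace ℝ (Fin n) →L[ℝ] EuclideanSpace ℝ (Fin n))
    (hsym : ∀ u v, ⟪T u, v⟫ = ⟪u, T v⟫) (hpos : ∀ w, 0 ≤ ⟪T w, w⟫)
    (u v : EuclideanSpace ℝ (Fin n)) :
    ⟪T u, v⟫ ^ 2 ≤ ⟪T u, u⟫ * ⟪T v, v⟫ := by
  have key : ∀ t : ℝ, 0 ≤ ⟪T v, v⟫ * (t * t) + (2 * ⟪T u, v⟫) * t + ⟪T u, u⟫ := by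
    intro t
    have h0 := hpos (u + t • v)
    have hvu : ⟪T v, u⟫ = ⟪T u, v⟫ := by
      rw [hsym v u, real_inner_comm]
    have hexp : ⟪T (u + t • v), u + t • v⟫
        = ⟪T v, v⟫ * (t * t) + (2 * ⟪T u, v⟫) * t + ⟪T u, u⟫ := by
      rw [map_add, map_smul, inner_add_left, inner_add_right, inner_add_right,
        real_inner_smul_right, real_inner_smul_left, real_inner_smul_left,
        real_inner_smul_right, hvu]
      ring
    rw [hexp] at h0
    exact h0
  have hd := discrim_le_zero key
  rw [discrim] at hd
  nlinarith [hd]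


private lemma clm_inner_dot (M : Matrix (Fin n) (Fin n) ℝ) (d : E) :
    ⟪(CLM M) d, d⟫ = dotProduct (star ((WithLp.equiv 2 (Fin n → ℝ)) d))
      (M.mulVec ((WithLp.equiv 2 (Fin n → ℝ)) d)) := by
  rw [PiLp.inner_apply, dotProduct]
  refine Finset.sum_congr rfl fun i _ => ?_
  have h : ((CLM M) d) i = (M.mulVec ((WithLp.equiv 2 (Fin n → ℝ)) d)) i := by
    have h1 := Matrix.ofLp_toEuclideanCLM (𝕜 := ℝ) M d
    have h2 : (WithLp.equiv 2 (Fin n → ℝ)) ((CLM M) d) i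
        = Matrix.toLin' M ((WithLp.equiv 2 (Fin n → ℝ)) d) i := by
        rw [Matrix.toLin'_apply]; exact congrFun h1 i
    rw [Matrix.toLin'_apply] at h2
    exact h2
  rw [h]
  simp [RCLike.inner_apply, mul_comm]

set_option maxHeartbeats 2000000

/-- near a point where the Hessian is positive definite (and
`τ < 1/‖∇²f(x*)‖`), the maps `F_q(x;·)` are homeomorphisms of `ℝⁿ` with
uniformly Lipschitz inverses (constant `2/λ`). -/
theorem stmt_11
    (f : E → ℝ) (hf : ContDiff ℝ 2 f)
    (g : E → E) (hg : ∀ y, HasGradientAt f (g y) y)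
    (Hess : E → Matrix (Fin n) (Fin n) ℝ)
    (hHess : ∀ y, HasFDerivAt g (CLM (Hess y)) y)
    (μ τ : ℝ) (hμ : 0 < μ) (hτ0 : 0 < τ)
    (xstar : E) (hpd : (Hess xstar).PosDef)
    (hτ : τ < 1 / ‖CLM (Hess xstar)‖)
    (Fq : E → E → E)
    (hFq : ∀ x y i, Fq x y i =
      g x i + CLM (Hess x) (y - x) i -
        max (-μ) (min μ (g x i + CLM (Hess x) (y - x) i - y i / τ))) :
    ∃ N ∈ nhds xstar, ∃ lam : ℝ, 0 < lam ∧
      ∀ x ∈ N,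
        Function.Bijective (Fq x) ∧ Continuous (Fq x) ∧
        ∀ y z : E, ‖z - y‖ ≤ (2 / lam) * ‖Fq x z - Fq x y‖ := by
  classical
  set Astar := CLM (Hess xstar) with hAstar
  -- basic facts about the norms
  have hA0 : 0 < ‖Astar‖ := by
    rcases (norm_nonneg Astar).eq_or_lt with h | h
    · exfalso
      rw [← h] at hτ
      simp only [div_zero] at hτ
      linarith
    · exact h
  have hτA : ‖Astar‖ < 1 / τ := by
    have h1 : τ * ‖Astar‖ < 1 := (lt_div_iff₀ hA0).1 hτ
    rw [lt_div_iff₀ hτ0]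
    calc ‖Astar‖ * τ = τ * ‖Astar‖ := mul_comm _ _
      _ < 1 := h1
  -- continuity of the Hessian field
  have hfd : ∀ y, fderiv ℝ f y = (InnerProductSpace.toDual ℝ E) (g y) := fun y =>
    (hg y).hasFDerivAt.fderiv
  have hgeq : g = fun y => (InnerProductSpace.toDual ℝ E).symm (fderiv ℝ f y) := by
    funext y
    rw [hfd y, LinearIsometryEquiv.symm_apply_apply]
  have hg1 : ContDiff ℝ 1 g := by
    rw [hgeq]
    exact (InnerProductSpace.toDual ℝ E).symm.contDiff.comp
      (hf.fderiv_right (by norm_num))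
  have hAcont : Continuous fun x : E => CLM (Hess x) := by
    have h1 : Continuous fun x : E => fderiv ℝ g x := hg1.continuous_fderiv one_ne_zero
    have h2 : (fun x : E => fderiv ℝ g x) = fun x : E => CLM (Hess x) :=
      funext fun x => (hHess x).fderiv
    rwa [h2] at h1
  -- positivity of the quadratic form at xstar
  obtain ⟨d0, hd0⟩ : ∃ d : E, Astar d ≠ 0 := by
    by_contra hcon
    push_neg at hcon
    have hz : Astar = 0 := ContinuousLinearMap.ext fun d => by simp [hcon d]
    rw [hz, norm_zero] at hA0
    exact lt_irrefl 0 hA0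
  have hd0' : d0 ≠ 0 := by
    intro h
    apply hd0
    rw [h, map_zero]
  haveI hnontriv : Nontrivial E := nontrivial_of_ne d0 0 hd0'
  have hsphne : (Metric.sphere (0 : E) 1).Nonempty := NormedSpace.sphere_nonempty.2 zero_le_one
  have hQcont : Continuous fun d : E => ⟪Astar d, d⟫ := Astar.continuous.inner continuous_id
  obtain ⟨d1, hd1S, hd1min⟩ :=
    (isCompact_sphere (0 : E) 1).exists_isMinOn hsphne hQcont.continuousOn
  set lam0 := ⟪Astar d1, d1⟫ with hlam0
  have hposd : ∀ d : E, d ≠ 0 → 0 < ⟪Astar d, d⟫ := by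
    intro d hd
    have hd' : (WithLp.equiv 2 (Fin n → ℝ)) d ≠ 0 := by
      intro h
      apply hd
      exact (WithLp.equiv 2 (Fin n → ℝ)).injective (by simpa using h)
    have h := hpd.dotProduct_mulVec_pos hd'
    rw [hAstar, clm_inner_dot]
    exact h
  have hlam0pos : 0 < lam0 := by
    apply hposd
    intro h
    rw [h, mem_sphere_zero_iff_norm, norm_zero] at hd1S
    exact one_ne_zero hd1S.symm
  have hlamA : ∀ d : E, lam0 * ‖d‖ ^ 2 ≤ ⟪Astar d, d⟫ := by
    intro d
    rcases eq_or_ne d 0 with rfl | hd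
    · simp
    · have hdn : ‖d‖ ≠ 0 := norm_ne_zero_iff.2 hd
      set u : E := ‖d‖⁻¹ • d with hu
      have huS : u ∈ Metric.sphere (0 : E) 1 := by
        rw [mem_sphere_zero_iff_norm, hu, norm_smul, norm_inv, norm_norm,
          inv_mul_cancel₀ hdn]
      have hmin : lam0 ≤ ⟪Astar u, u⟫ := hd1min huS
      have hdu : d = ‖d‖ • u := by
        rw [hu, smul_smul, mul_inv_cancel₀ hdn, one_smul]
      have hscale : ⟪Astar d, d⟫ = ‖d‖ ^ 2 * ⟪Astar u, u⟫ := by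
        conv_lhs => rw [hdu]
        rw [map_smul, real_inner_smul_left, real_inner_smul_right]
        ring
      rw [hscale]
      calc lam0 * ‖d‖ ^ 2 ≤ ⟪Astar u, u⟫ * ‖d‖ ^ 2 :=
            mul_le_mul_of_nonneg_right hmin (sq_nonneg _)
        _ = ‖d‖ ^ 2 * ⟪Astar u, u⟫ := mul_comm _ _
  have hsym : ∀ u v : E, ⟪Astar u, v⟫ = ⟪u, Astar v⟫ := by
    have h := Matrix.isHermitian_iff_isSymmetric.1 hpd.1
    intro u v
    exact h u v
  have hS2 : ∀ d : E, ‖Astar d‖ ^ 2 ≤ ‖Astar‖ * ⟪Astar d, d⟫ := by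
    intro d
    have hpos : ∀ w : E, 0 ≤ ⟪Astar w, w⟫ := by
      intro w
      rcases eq_or_ne w 0 with rfl | hw
      · simp
      · exact (hposd w hw).le
    have hcs := psd_cs Astar hsym hpos d (Astar d)
    have h1 : ⟪Astar d, Astar d⟫ = ‖Astar d‖ ^ 2 := real_inner_self_eq_norm_sq _
    have h2 : ⟪Astar (Astar d), Astar d⟫ ≤ ‖Astar‖ * ‖Astar d‖ ^ 2 := by
      calc ⟪Astar (Astar d), Astar d⟫ ≤ ‖Astar (Astar d)‖ * ‖Astar d‖ :=
            real_inner_le_norm _ _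
        _ ≤ (‖Astar‖ * ‖Astar d‖) * ‖Astar d‖ :=
            mul_le_mul_of_nonneg_right (Astar.le_opNorm _) (norm_nonneg _)
        _ = ‖Astar‖ * ‖Astar d‖ ^ 2 := by ring
    rcases (norm_nonneg (Astar d)).eq_or_lt with h0 | h0
    · rw [← h0]
      simpa using mul_nonneg hA0.le (hpos d)
    · have e1 : ‖Astar d‖ ^ 2 * ‖Astar d‖ ^ 2
          ≤ ⟪Astar d, d⟫ * (‖Astar‖ * ‖Astar d‖ ^ 2) := by
        calc ‖Astar d‖ ^ 2 * ‖Astar d‖ ^ 2 = (⟪Astar d, Astar d⟫) ^ 2 := by rw [h1]; ring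
          _ ≤ ⟪Astar d, d⟫ * ⟪Astar (Astar d), Astar d⟫ := hcs
          _ ≤ ⟪Astar d, d⟫ * (‖Astar‖ * ‖Astar d‖ ^ 2) :=
              mul_le_mul_of_nonneg_left h2 (hpos d)
      refine le_of_mul_le_mul_right ?_ (pow_pos h0 2)
      calc ‖Astar d‖ ^ 2 * ‖Astar d‖ ^ 2
          ≤ ⟪Astar d, d⟫ * (‖Astar‖ * ‖Astar d‖ ^ 2) := e1
        _ = ‖Astar‖ * ⟪Astar d, d⟫ * ‖Astar d‖ ^ 2 := by ring
  set cstar := (1 / τ - ‖Astar‖) * lam0 with hcstar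
  have hcstarpos : 0 < cstar := mul_pos (by linarith) hlam0pos
  have hQstar : ∀ d : E, cstar * ‖d‖ ^ 2 ≤ ⟪Astar d, (1 / τ) • d - Astar d⟫ := by
    intro d
    rw [inner_sub_right, real_inner_smul_right, real_inner_self_eq_norm_sq]
    have h1 := hS2 d
    have h2 := hlamA d
    have h4 : (1 / τ - ‖Astar‖) * (lam0 * ‖d‖ ^ 2) ≤ (1 / τ - ‖Astar‖) * ⟪Astar d, d⟫ :=
      mul_le_mul_of_nonneg_left h2 (by linarith)
    calc cstar * ‖d‖ ^ 2 = (1 / τ - ‖Astar‖) * (lam0 * ‖d‖ ^ 2) := by rw [hcstar]; ring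
      _ ≤ (1 / τ - ‖Astar‖) * ⟪Astar d, d⟫ := h4
      _ = (1 / τ) * ⟪Astar d, d⟫ - ‖Astar‖ * ⟪Astar d, d⟫ := by ring
      _ ≤ (1 / τ) * ⟪Astar d, d⟫ - ‖Astar d‖ ^ 2 := by linarith
  -- parameters
  set K := ‖Astar‖ + 1 with hK
  have hKpos : 0 < K := by rw [hK]; positivity
  set c := cstar / 2 with hc
  have hcpos : 0 < c := by rw [hc]; positivity
  set ε := min 1 (min ((1 / τ - ‖Astar‖) / 2) (cstar / (2 * (1 / τ + 2 * ‖Astar‖ + 2)))) with hε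
  have hXpos : (0:ℝ) < 1 / τ + 2 * ‖Astar‖ + 2 := by positivity
  have hεpos : 0 < ε := by
    refine lt_min one_pos (lt_min (by linarith) ?_)
    positivity
  have hε1 : ε ≤ 1 := min_le_left _ _
  have hε2 : ε ≤ (1 / τ - ‖Astar‖) / 2 := le_trans (min_le_right _ _) (min_le_left _ _)
  have hε3 : ε ≤ cstar / (2 * (1 / τ + 2 * ‖Astar‖ + 2)) :=
    le_trans (min_le_right _ _) (min_le_right _ _)
  have hτKpos : (0:ℝ) < 1 / τ + K := by positivity
  set lam := 2 * c / (1 / τ + K) with hlam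
  have hlampos : 0 < lam := by rw [hlam]; positivity
  have h2lam : 2 / lam = (1 / τ + K) / c := by
    rw [hlam]
    field_simp
  refine ⟨(fun x : E => CLM (Hess x)) ⁻¹' Metric.ball Astar ε,
    hAcont.continuousAt.preimage_mem_nhds (Metric.ball_mem_nhds _ hεpos), lam, hlampos, ?_⟩
  intro x hx
  have hxε : ‖CLM (Hess x) - Astar‖ < ε := by
    rw [Set.mem_preimage, Metric.mem_ball, dist_eq_norm] at hx
    exact hx
  set A := CLM (Hess x) with hA
  have hAK : ‖A‖ ≤ K := by
    calc ‖A‖ = ‖Astar + (A - Astar)‖ := by rw [add_sub_cancel]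
      _ ≤ ‖Astar‖ + ‖A - Astar‖ := norm_add_le _ _
      _ ≤ K := by rw [hK]; linarith
  set Mop : E →L[ℝ] E := (1 / τ) • ContinuousLinearMap.id ℝ E - A with hMop
  have hMopapply : ∀ w : E, Mop w = (1 / τ) • w - A w := fun w => rfl
  have hMnorm : ‖Mop‖ ≤ 1 / τ + K := by
    refine ContinuousLinearMap.opNorm_le_bound _ hτKpos.le fun w => ?_
    rw [hMopapply]
    calc ‖(1 / τ : ℝ) • w - A w‖ ≤ ‖(1 / τ : ℝ) • w‖ + ‖A w‖ := norm_sub_le _ _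
      _ ≤ (1 / τ) * ‖w‖ + K * ‖w‖ := by
          refine add_le_add ?_
            (le_trans (A.le_opNorm w) (mul_le_mul_of_nonneg_right hAK (norm_nonneg _)))
          rw [norm_smul, Real.norm_eq_abs, abs_of_pos (by positivity : (0:ℝ) < 1 / τ)]
      _ = (1 / τ + K) * ‖w‖ := by ring
  -- uniform coercivity of the M-pairing
  have hQ : ∀ d : E, c * ‖d‖ ^ 2 ≤ ⟪A d, Mop d⟫ := by
    intro d
    have hdecomp : ⟪A d, Mop d⟫ = ⟪(A - Astar) d, Mop d⟫
        + ⟪Astar d, (1 / τ) • d - Astar d⟫ + ⟪Astar d, (Astar - A) d⟫ := by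
      rw [hMopapply d]
      simp only [ContinuousLinearMap.sub_apply]
      simp only [inner_sub_left, inner_sub_right]
      ring
    have b1 : |⟪(A - Astar) d, Mop d⟫| ≤ (ε * (1 / τ + K)) * ‖d‖ ^ 2 := by
      calc |⟪(A - Astar) d, Mop d⟫| ≤ ‖(A - Astar) d‖ * ‖Mop d‖ :=
            abs_real_inner_le_norm _ _
        _ ≤ (‖A - Astar‖ * ‖d‖) * (‖Mop‖ * ‖d‖) := by
            gcongr <;> [exact (A - Astar).le_opNorm d; exact Mop.le_opNorm d]
        _ ≤ (ε * ‖d‖) * ((1 / τ + K) * ‖d‖) := by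
            gcongr <;> try exact hxε.le
        _ = (ε * (1 / τ + K)) * ‖d‖ ^ 2 := by ring
    have b2 : |⟪Astar d, (Astar - A) d⟫| ≤ (‖Astar‖ * ε) * ‖d‖ ^ 2 := by
      calc |⟪Astar d, (Astar - A) d⟫| ≤ ‖Astar d‖ * ‖(Astar - A) d‖ :=
            abs_real_inner_le_norm _ _
        _ ≤ (‖Astar‖ * ‖d‖) * (‖Astar - A‖ * ‖d‖) := by
            gcongr <;> [exact Astar.le_opNorm d; exact (Astar - A).le_opNorm d]
        _ ≤ (‖Astar‖ * ‖d‖) * (ε * ‖d‖) := by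
            gcongr <;> try (rw [norm_sub_rev]; exact hxε.le)
        _ = (‖Astar‖ * ε) * ‖d‖ ^ 2 := by ring
    have hεbound : ε * (1 / τ + K) + ‖Astar‖ * ε ≤ cstar / 2 := by
      have h6 : ε * (1 / τ + 2 * ‖Astar‖ + 2) ≤ cstar / 2 := by
        calc ε * (1 / τ + 2 * ‖Astar‖ + 2)
            ≤ (cstar / (2 * (1 / τ + 2 * ‖Astar‖ + 2))) * (1 / τ + 2 * ‖Astar‖ + 2) :=
              mul_le_mul_of_nonneg_right hε3 hXpos.le
          _ = cstar / 2 := by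
              field_simp
      have h7 : ε * (1 / τ + K) + ‖Astar‖ * ε = ε * (1 / τ + 2 * ‖Astar‖ + 1) := by
        rw [hK]; ring
      have h8 : ε * (1 / τ + 2 * ‖Astar‖ + 1) ≤ ε * (1 / τ + 2 * ‖Astar‖ + 2) :=
        mul_le_mul_of_nonneg_left (by linarith) hεpos.le
      linarith
    have hQd := hQstar d
    have h9 : (ε * (1 / τ + K) + ‖Astar‖ * ε) * ‖d‖ ^ 2 ≤ (cstar / 2) * ‖d‖ ^ 2 :=
      mul_le_mul_of_nonneg_right hεbound (sq_nonneg _)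
    have h10 : c * ‖d‖ ^ 2 = cstar * ‖d‖ ^ 2 - (cstar / 2) * ‖d‖ ^ 2 := by
      rw [hc]; ring
    rw [hdecomp, h10]
    have n1 := neg_abs_le ⟪(A - Astar) d, Mop d⟫
    have n2 := neg_abs_le ⟪Astar d, (Astar - A) d⟫
    nlinarith [b1, b2, h9, hQd, n1, n2]
  -- positivity of Mop
  have hm0 : (0:ℝ) < (1 / τ - ‖Astar‖) / 2 := by linarith
  have hMpd : ∀ w : E, ((1 / τ - ‖Astar‖) / 2) * ‖w‖ ^ 2 ≤ ⟪Mop w, w⟫ := by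
    intro w
    rw [hMopapply, inner_sub_left, real_inner_smul_left, real_inner_self_eq_norm_sq]
    have h7 : ⟪A w, w⟫ ≤ ‖A‖ * ‖w‖ ^ 2 := by
      calc ⟪A w, w⟫ ≤ ‖A w‖ * ‖w‖ := real_inner_le_norm _ _
        _ ≤ (‖A‖ * ‖w‖) * ‖w‖ := mul_le_mul_of_nonneg_right (A.le_opNorm w) (norm_nonneg _)
        _ = ‖A‖ * ‖w‖ ^ 2 := by ring
    have h8 : ‖A‖ ≤ ‖Astar‖ + ε := by
      calc ‖A‖ = ‖Astar + (A - Astar)‖ := by rw [add_sub_cancel]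
        _ ≤ ‖Astar‖ + ‖A - Astar‖ := norm_add_le _ _
        _ ≤ ‖Astar‖ + ε := by linarith
    have h9 : ⟪A w, w⟫ ≤ (‖Astar‖ + (1 / τ - ‖Astar‖) / 2) * ‖w‖ ^ 2 := by
      calc ⟪A w, w⟫ ≤ ‖A‖ * ‖w‖ ^ 2 := h7
        _ ≤ (‖Astar‖ + (1 / τ - ‖Astar‖) / 2) * ‖w‖ ^ 2 :=
            mul_le_mul_of_nonneg_right (by linarith) (sq_nonneg _)
    nlinarith [h9, sq_nonneg ‖w‖]
  -- the two key estimates for differences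
  have main : ∀ y z : E,
      c * ‖z - y‖ ^ 2 ≤ ⟪Fq x z - Fq x y, Mop (z - y)⟫ ∧
      ‖Fq x z - Fq x y‖ ≤ (K + (1 / τ + K)) * ‖z - y‖ := by
    intro y z
    have hcomp : ∀ i, (Fq x z - Fq x y) i - (A (z - y)) i =
        -(max (-μ) (min μ ((g x i + A (y - x) i - y i / τ) + (A (z - y) i - (z - y) i / τ)))
          - max (-μ) (min μ (g x i + A (y - x) i - y i / τ))) := by
      intro i
      have h1 := hFq x z i
      have h2 := hFq x y i
      rw [← hA] at h1 h2
      have e1 : A (z - x) = A (y - x) + A (z - y) := by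
        rw [← map_add]
        congr 1
        abel
      have e2 : (A (z - x)) i = A (y - x) i + A (z - y) i := by rw [e1]; rfl
      have e3 : z i = y i + (z - y) i := by
        have : (z - y) i = z i - y i := rfl
        rw [this]; ring
      have e4 : g x i + A (z - x) i - z i / τ =
          (g x i + A (y - x) i - y i / τ) + (A (z - y) i - (z - y) i / τ) := by
        rw [e2, e3]; ring
      have e5 : (Fq x z - Fq x y) i = Fq x z i - Fq x y i := rfl
      rw [e5, h1, h2, e4, e2]
      ring
    have hMdi : ∀ i, (Mop (z - y)) i = -((A (z - y)) i - (z - y) i / τ) := by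
      intro i
      rw [hMopapply]
      have : ((1 / τ : ℝ) • (z - y) - A (z - y)) i = (1 / τ) * (z - y) i - A (z - y) i := rfl
      rw [this]
      ring
    have hK1 : 0 ≤ ⟪Fq x z - Fq x y - A (z - y), Mop (z - y)⟫ := by
      apply euclid_inner_nonneg
      intro i
      have e6 : (Fq x z - Fq x y - A (z - y)) i = (Fq x z - Fq x y) i - (A (z - y)) i := rfl
      rw [e6, hcomp i, hMdi i, neg_mul_neg]
      set p := g x i + A (y - x) i - y i / τ
      set s := A (z - y) i - (z - y) i / τ
      rcases le_or_gt 0 s with hs | hs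
      · have hδ : max (-μ) (min μ p) ≤ max (-μ) (min μ (p + s)) :=
          clamp_mono μ (by linarith)
        have : 0 ≤ max (-μ) (min μ (p + s)) - max (-μ) (min μ p) := by linarith
        exact mul_nonneg this hs
      · have hδ : max (-μ) (min μ (p + s)) ≤ max (-μ) (min μ p) :=
          clamp_mono μ (by linarith)
        nlinarith
    have hK2 : ‖Fq x z - Fq x y - A (z - y)‖ ≤ ‖Mop (z - y)‖ := by
      apply euclid_norm_le
      intro i
      have e6 : (Fq x z - Fq x y - A (z - y)) i = (Fq x z - Fq x y) i - (A (z - y)) i := rfl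
      rw [e6, hcomp i, hMdi i, abs_neg, abs_neg]
      set p := g x i + A (y - x) i - y i / τ
      set s := A (z - y) i - (z - y) i / τ
      have := clamp_lip μ p (p + s)
      simpa using this
    constructor
    · have hsplit : ⟪Fq x z - Fq x y, Mop (z - y)⟫ =
          ⟪A (z - y), Mop (z - y)⟫ + ⟪Fq x z - Fq x y - A (z - y), Mop (z - y)⟫ := by
        rw [← inner_add_left]
        congr 1
        abel
      have h1 := hQ (z - y)
      linarith [hsplit, hK1, h1]
    · calc ‖Fq x z - Fq x y‖ = ‖A (z - y) + (Fq x z - Fq x y - A (z - y))‖ := by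
            congr 1
            abel
        _ ≤ ‖A (z - y)‖ + ‖Fq x z - Fq x y - A (z - y)‖ := norm_add_le _ _
        _ ≤ ‖A‖ * ‖z - y‖ + ‖Mop (z - y)‖ := add_le_add (A.le_opNorm _) hK2
        _ ≤ K * ‖z - y‖ + (1 / τ + K) * ‖z - y‖ := by
            refine add_le_add (mul_le_mul_of_nonneg_right hAK (norm_nonneg _)) ?_
            calc ‖Mop (z - y)‖ ≤ ‖Mop‖ * ‖z - y‖ := Mop.le_opNorm _
              _ ≤ (1 / τ + K) * ‖z - y‖ :=
                  mul_le_mul_of_nonneg_right hMnorm (norm_nonneg _)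
        _ = (K + (1 / τ + K)) * ‖z - y‖ := by ring
  -- the Lipschitz lower bound
  have hbound : ∀ y z : E, ‖z - y‖ ≤ (2 / lam) * ‖Fq x z - Fq x y‖ := by
    intro y z
    rcases eq_or_ne z y with rfl | hzy
    · simp
    · have hdpos : 0 < ‖z - y‖ := by
        rw [norm_pos_iff, sub_ne_zero]
        exact hzy
      have hchain : c * ‖z - y‖ ^ 2 ≤ ‖Fq x z - Fq x y‖ * ((1 / τ + K) * ‖z - y‖) := by
        have i1 : ⟪Fq x z - Fq x y, Mop (z - y)⟫ ≤ ‖Fq x z - Fq x y‖ * ‖Mop (z - y)‖ :=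
          real_inner_le_norm _ _
        have i2 : ‖Mop (z - y)‖ ≤ (1 / τ + K) * ‖z - y‖ := by
          calc ‖Mop (z - y)‖ ≤ ‖Mop‖ * ‖z - y‖ := Mop.le_opNorm _
            _ ≤ (1 / τ + K) * ‖z - y‖ := mul_le_mul_of_nonneg_right hMnorm (norm_nonneg _)
        have i3 : ‖Fq x z - Fq x y‖ * ‖Mop (z - y)‖
            ≤ ‖Fq x z - Fq x y‖ * ((1 / τ + K) * ‖z - y‖) :=
          mul_le_mul_of_nonneg_left i2 (norm_nonneg _)
        linarith [(main y z).1]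
      have h5 : c * ‖z - y‖ ≤ ‖Fq x z - Fq x y‖ * (1 / τ + K) := by
        refine le_of_mul_le_mul_right ?_ hdpos
        calc c * ‖z - y‖ * ‖z - y‖ = c * ‖z - y‖ ^ 2 := by ring
          _ ≤ ‖Fq x z - Fq x y‖ * ((1 / τ + K) * ‖z - y‖) := hchain
          _ = ‖Fq x z - Fq x y‖ * (1 / τ + K) * ‖z - y‖ := by ring
      rw [h2lam]
      rw [div_mul_eq_mul_div, le_div_iff₀ hcpos]
      calc ‖z - y‖ * c = c * ‖z - y‖ := mul_comm _ _
        _ ≤ ‖Fq x z - Fq x y‖ * (1 / τ + K) := h5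
        _ = (1 / τ + K) * ‖Fq x z - Fq x y‖ := mul_comm _ _
  -- injectivity
  have hinj : Function.Injective (Fq x) := by
    intro y z hyz
    have := hbound y z
    rw [hyz] at this
    simp only [sub_self, norm_zero, mul_zero] at this
    have : z - y = 0 := by
      rw [← norm_le_zero_iff]
      exact this
    rw [sub_eq_zero] at this
    exact this.symm
  -- continuity
  have hcontF : Continuous (Fq x) := by
    have hFeq : Fq x = fun y : E => (PiLp.continuousLinearEquiv 2 ℝ (fun _ : Fin n => ℝ)).symm
        (fun i => g x i + A (y - x) i -
          max (-μ) (min μ (g x i + A (y - x) i - y i / τ))) := by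
      funext y
      apply PiLp.ext
      intro i
      have h1 := hFq x y i
      rw [← hA] at h1
      exact h1
    rw [hFeq]
    refine ((PiLp.continuousLinearEquiv 2 ℝ _).symm.continuous).comp (continuous_pi fun i => ?_)
    have hc1 : Continuous fun y : E => A (y - x) i := by
      have hc0 : Continuous fun y : E => A (y - x) :=
        A.continuous.comp (continuous_id.sub continuous_const)
      exact (EuclideanSpace.proj i).continuous.comp hc0
    have hc2 : Continuous fun y : E => y i := (EuclideanSpace.proj (𝕜 := ℝ) i).continuous
    have harg : Continuous fun y : E => g x i + A (y - x) i - y i / τ :=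
      (continuous_const.add hc1).sub (hc2.div_const τ)
    exact (continuous_const.add hc1).sub (continuous_const.max (continuous_const.min harg))
  -- surjectivity
  have hsurj : Function.Surjective (Fq x) := by
    intro b
    set L := K + (1 / τ + K) with hL
    have hLpos : 0 < L := by rw [hL]; positivity
    set B := ((1 / τ + K) * L) ^ 2 with hB
    have hBpos : 0 < B := by rw [hB]; positivity
    set t := c / B with ht
    have htpos : 0 < t := by rw [ht]; positivity
    set Madj := ContinuousLinearMap.adjoint Mop with hMadj
    have hadjnorm : ‖Madj‖ = ‖Mop‖ := by
      rw [hMadj]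
      exact ContinuousLinearMap.adjoint.norm_map Mop
    set T := fun y : E => y - t • Madj (Fq x y - b) with hT
    have hTlip : ∀ y z : E, ‖T z - T y‖ ^ 2 ≤ (1 - t * c) * ‖z - y‖ ^ 2 := by
      intro y z
      have hTd : T z - T y = (z - y) - t • Madj (Fq x z - Fq x y) := by
        rw [hT]
        simp only []
        have e : t • Madj (Fq x z - b) - t • Madj (Fq x y - b)
            = t • Madj (Fq x z - Fq x y) := by
          rw [← smul_sub, ← map_sub]
          congr 2
          abel
        rw [← e]
        abel
      rw [hTd, norm_sub_sq_real]
      have hinner : ⟪z - y, t • Madj (Fq x z - Fq x y)⟫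
          = t * ⟪Fq x z - Fq x y, Mop (z - y)⟫ := by
        rw [real_inner_smul_right]
        congr 1
        rw [real_inner_comm]
        exact ContinuousLinearMap.adjoint_inner_left Mop (z - y) (Fq x z - Fq x y)
      have hnorm2 : ‖t • Madj (Fq x z - Fq x y)‖ ≤ t * (((1 / τ + K) * L) * ‖z - y‖) := by
        rw [norm_smul, Real.norm_eq_abs, abs_of_pos htpos]
        refine mul_le_mul_of_nonneg_left ?_ htpos.le
        calc ‖Madj (Fq x z - Fq x y)‖ ≤ ‖Madj‖ * ‖Fq x z - Fq x y‖ := Madj.le_opNorm _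
          _ = ‖Mop‖ * ‖Fq x z - Fq x y‖ := by rw [hadjnorm]
          _ ≤ (1 / τ + K) * (L * ‖z - y‖) := by
              refine mul_le_mul hMnorm ?_ (norm_nonneg _) hτKpos.le
              rw [hL] at *
              exact (main y z).2
          _ = ((1 / τ + K) * L) * ‖z - y‖ := by ring
      have h1 : t * (c * ‖z - y‖ ^ 2) ≤ t * ⟪Fq x z - Fq x y, Mop (z - y)⟫ :=
        mul_le_mul_of_nonneg_left (main y z).1 htpos.le
      have h2 : ‖t • Madj (Fq x z - Fq x y)‖ ^ 2
          ≤ (t * ((1 / τ + K) * L)) ^ 2 * ‖z - y‖ ^ 2 := by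
        calc ‖t • Madj (Fq x z - Fq x y)‖ ^ 2 ≤ (t * (((1 / τ + K) * L) * ‖z - y‖)) ^ 2 :=
              pow_le_pow_left₀ (norm_nonneg _) hnorm2 2
          _ = (t * ((1 / τ + K) * L)) ^ 2 * ‖z - y‖ ^ 2 := by ring
      rw [hinner]
      have htB : t * B = c := by
        rw [ht]
        field_simp
      have hB2 : (t * ((1 / τ + K) * L)) ^ 2 * ‖z - y‖ ^ 2 = (t * c) * ‖z - y‖ ^ 2 := by
        calc (t * ((1 / τ + K) * L)) ^ 2 * ‖z - y‖ ^ 2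
            = (t * (t * B)) * ‖z - y‖ ^ 2 := by rw [hB]; ring
          _ = (t * c) * ‖z - y‖ ^ 2 := by rw [htB]
      nlinarith [h1, h2, hB2]
    set ρ := max 0 (1 - t * c) with hρ
    have hρ0 : 0 ≤ ρ := le_max_left _ _
    have hρ1 : ρ < 1 := by
      rw [hρ]
      refine max_lt one_pos ?_
      have := mul_pos htpos hcpos
      linarith
    set Kc : NNReal := Real.toNNReal (Real.sqrt ρ) with hKc
    have hsqrtρ : Real.sqrt ρ < 1 := by
      rw [show (1:ℝ) = Real.sqrt 1 from (Real.sqrt_one).symm]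
      exact Real.sqrt_lt_sqrt hρ0 hρ1
    have hKc1 : Kc < 1 := by
      rw [← NNReal.coe_lt_coe, hKc, Real.coe_toNNReal _ (Real.sqrt_nonneg _), NNReal.coe_one]
      exact hsqrtρ
    have hlipT : LipschitzWith Kc T := by
      refine LipschitzWith.of_dist_le_mul fun z y => ?_
      rw [dist_eq_norm, dist_eq_norm]
      have h1 := hTlip y z
      have h2 : ‖T z - T y‖ ^ 2 ≤ ρ * ‖z - y‖ ^ 2 := by
        refine le_trans h1 (mul_le_mul_of_nonneg_right (le_max_right _ _) (sq_nonneg _))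
      have h4 := Real.sqrt_le_sqrt h2
      rw [Real.sqrt_sq (norm_nonneg _), Real.sqrt_mul hρ0, Real.sqrt_sq (norm_nonneg _)] at h4
      calc ‖T z - T y‖ ≤ Real.sqrt ρ * ‖z - y‖ := h4
        _ = (Kc : ℝ) * ‖z - y‖ := by
            rw [hKc, Real.coe_toNNReal _ (Real.sqrt_nonneg _)]
    have hcontract : ContractingWith Kc T := ⟨hKc1, hlipT⟩
    set y0 := ContractingWith.fixedPoint T hcontract with hy0
    have hfix : T y0 = y0 := hcontract.fixedPoint_isFixedPt
    have h0 : t • Madj (Fq x y0 - b) = 0 := by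
      have := hfix
      rw [hT] at this
      exact sub_eq_self.mp this
    have h1 : Madj (Fq x y0 - b) = 0 := by
      rcases smul_eq_zero.1 h0 with h | h
      · exact absurd h (ne_of_gt htpos)
      · exact h
    refine ⟨y0, ?_⟩
    have h3 : ⟪Mop (Fq x y0 - b), Fq x y0 - b⟫ = 0 := by
      have hadj := ContinuousLinearMap.adjoint_inner_left Mop (Fq x y0 - b) (Fq x y0 - b)
      rw [← hMadj, h1] at hadj
      simp only [inner_zero_left] at hadj
      rw [real_inner_comm]
      exact hadj.symm
    have h4 := hMpd (Fq x y0 - b)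
    rw [h3] at h4
    have hw : Fq x y0 - b = 0 := by
      by_contra hw
      have hpos2 : 0 < ‖Fq x y0 - b‖ ^ 2 := by
        have := norm_pos_iff.2 hw
        positivity
      nlinarith [mul_pos hm0 hpos2]
    rw [sub_eq_zero] at hw
    exact hw
  exact ⟨⟨hinj, hsurj⟩, hcontF, hbound⟩
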